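/- The graph K_{6,6} minus a perfect matching is 5-regular, 3-sparse, triangle-free, and every pair of non-adjacent vertices has either zero or exactly four common neighbours. -/

import Mathlib

open Finset

variable {V : Type*} [Fintype V] [DecidableEq V]

/-- `i(X)`: the number of edges of `G` with both endpoints in `X`. -/
def edgesWithin (G : SimpleGraph V) [DecidableRel G.Adj] (X : Finset V) : ℕ :=
  ((X ×ˢ X).filter fun p => G.Adj p.1 p.2).card / 2

/-- `d(X,Y)`: the number of edges of `G` with one endpoint in `X \ Y` and the other in `Y \ X`. -/
def edgesBetween (G : SimpleGraph V) [DecidableRel G.Adj] (X Y : Finset V) : ℕ :=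
  (((X \ Y) ×ˢ (Y \ X)).filter fun p => G.Adj p.1 p.2).card

/-- `G` is 3-sparse: `i(X) ≤ 3|X| - 6` for all `X` with `|X| ≥ 3`. -/
def Sparse3 (G : SimpleGraph V) [DecidableRel G.Adj] : Prop :=
  ∀ X : Finset V, 3 ≤ X.card → edgesWithin G X + 6 ≤ 3 * X.card

/-- The set of common neighbours of `u` and `v`. -/
def commonNbrs (G : SimpleGraph V) [DecidableRel G.Adj] (u v : V) : Finset V :=
  Finset.univ.filter fun t => G.Adj u t ∧ G.Adj v t

/-- K_{6,6} minus a perfect matching. -/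
def K66minus : SimpleGraph (Fin 2 × Fin 6) where
  Adj a b := a.1 ≠ b.1 ∧ a.2 ≠ b.2
  symm := ⟨fun a b h => ⟨h.1.symm, h.2.symm⟩⟩
  loopless := ⟨fun a h => h.1 rfl⟩

instance : DecidableRel K66minus.Adj := fun a b =>
  inferInstanceAs (Decidable (a.1 ≠ b.1 ∧ a.2 ≠ b.2))

lemma fin2_cases' : ∀ v w : Fin 2, v ≠ w → (v = 0 ∧ w = 1) ∨ (v = 1 ∧ w = 0) := by decide

lemma sparse3_K66 : ∀ X : Finset (Fin 2 × Fin 6), 3 ≤ X.card → edgesWithin K66minus X + 6 ≤ 3 * X.card := by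
  intro X hX
  classical
  set A : Finset (Fin 2 × Fin 6) := X.filter (fun p => p.1 = 0) with hA
  set B : Finset (Fin 2 × Fin 6) := X.filter (fun p => p.1 = 1) with hB
  have memA : ∀ p, p ∈ A ↔ p ∈ X ∧ p.1 = 0 := fun p => by simp [hA]
  have memB : ∀ p, p ∈ B ↔ p ∈ X ∧ p.1 = 1 := fun p => by simp [hB]
  -- a + b = |X|
  have hab : A.card + B.card = X.card := by
    have hsum := Finset.card_filter_add_card_filter_not (s := X) (p := fun p => p.1 = 0)
    have heq : X.filter (fun p => p.1 = 1) = X.filter (fun p => ¬ p.1 = 0) := by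
      refine Finset.filter_congr fun p _ => ?_
      constructor
      · intro h; rw [h]; decide
      · intro h
        rcases fin2_cases' p.1 0 h with ⟨h1, _⟩ | ⟨h1, _⟩
        · exact absurd h1 h
        · exact h1
    rw [hA, hB, heq]
    omega
  set T : Finset ((Fin 2 × Fin 6) × (Fin 2 × Fin 6)) :=
    (A ×ˢ B).filter (fun p => K66minus.Adj p.1 p.2) with hT
  set T' : Finset ((Fin 2 × Fin 6) × (Fin 2 × Fin 6)) :=
    (B ×ˢ A).filter (fun p => K66minus.Adj p.1 p.2) with hT'
  have memT : ∀ p, p ∈ T ↔ (p.1 ∈ A ∧ p.2 ∈ B) ∧ K66minus.Adj p.1 p.2 := fun p => by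
    simp [hT, Finset.mem_filter, Finset.mem_product]
  have memT' : ∀ p, p ∈ T' ↔ (p.1 ∈ B ∧ p.2 ∈ A) ∧ K66minus.Adj p.1 p.2 := fun p => by
    simp [hT', Finset.mem_filter, Finset.mem_product]
  have hsplit : ((X ×ˢ X).filter fun p => K66minus.Adj p.1 p.2) = T ∪ T' := by
    ext ⟨p, q⟩
    simp only [Finset.mem_union, Finset.mem_filter, Finset.mem_product, memT, memT', memA, memB]
    constructor
    · rintro ⟨⟨hp, hq⟩, hadj⟩
      rcases fin2_cases' p.1 q.1 hadj.1 with ⟨h1, h2⟩ | ⟨h1, h2⟩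
      · exact Or.inl ⟨⟨⟨hp, h1⟩, ⟨hq, h2⟩⟩, hadj⟩
      · exact Or.inr ⟨⟨⟨hp, h1⟩, ⟨hq, h2⟩⟩, hadj⟩
    · rintro (⟨⟨⟨hp, _⟩, ⟨hq, _⟩⟩, hadj⟩ | ⟨⟨⟨hp, _⟩, ⟨hq, _⟩⟩, hadj⟩) <;> exact ⟨⟨hp, hq⟩, hadj⟩
  have hdisj : Disjoint T T' := by
    rw [Finset.disjoint_left]
    intro p hp hp'
    have h1 := ((memT p).mp hp).1.1
    have h2 := ((memT' p).mp hp').1.1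
    rw [memA] at h1; rw [memB] at h2
    rw [h1.2] at h2; exact absurd h2.2 (by decide)
  have hcardT' : T'.card = T.card := by
    apply Finset.card_bij (fun p _ => p.swap)
    · intro p hp
      rw [memT'] at hp
      rw [memT]
      exact ⟨⟨hp.1.2, hp.1.1⟩, hp.2.symm⟩
    · intro p _ q _ h
      exact Prod.swap_injective h
    · intro p hp
      refine ⟨p.swap, ?_, by simp⟩
      rw [memT] at hp
      rw [memT']
      exact ⟨⟨hp.1.2, hp.1.1⟩, hp.2.symm⟩
  have hEW : edgesWithin K66minus X = T.card := by
    rw [edgesWithin, hsplit, Finset.card_union_of_disjoint hdisj, hcardT']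
    omega
  -- complement within A ×ˢ B
  set M : Finset ((Fin 2 × Fin 6) × (Fin 2 × Fin 6)) :=
    (A ×ˢ B).filter (fun p => ¬ K66minus.Adj p.1 p.2) with hM
  have hTM : T.card + M.card = A.card * B.card := by
    rw [hT, hM, Finset.card_filter_add_card_filter_not, Finset.card_product]
  -- M in bijection with shared second coordinates
  set A2 : Finset (Fin 6) := A.image Prod.snd with hA2
  set B2 : Finset (Fin 6) := B.image Prod.snd with hB2
  have hA2card : A2.card = A.card := by
    apply Finset.card_image_of_injOn
    intro p hp q hq h
    rw [Finset.mem_coe, memA] at hp hq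
    exact Prod.ext (hp.2.trans hq.2.symm) h
  have hB2card : B2.card = B.card := by
    apply Finset.card_image_of_injOn
    intro p hp q hq h
    rw [Finset.mem_coe, memB] at hp hq
    exact Prod.ext (hp.2.trans hq.2.symm) h
  have hMcard : M.card = (A2 ∩ B2).card := by
    apply Finset.card_bij (fun p _ => p.1.2)
    · rintro ⟨p, q⟩ hp
      simp only [hM, Finset.mem_filter, Finset.mem_product] at hp
      obtain ⟨⟨hpA, hqB⟩, hnadj⟩ := hp
      have hne : p.1 ≠ q.1 := by
        rw [(memA p).mp hpA |>.2, (memB q).mp hqB |>.2]; decide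
      have heq : p.2 = q.2 := by
        by_contra hne2
        exact hnadj ⟨hne, hne2⟩
      rw [Finset.mem_inter, hA2, hB2]
      exact ⟨Finset.mem_image_of_mem _ hpA, heq ▸ Finset.mem_image_of_mem _ hqB⟩
    · rintro ⟨p, q⟩ hp ⟨p', q'⟩ hq h
      simp only [hM, Finset.mem_filter, Finset.mem_product] at hp hq
      obtain ⟨⟨hpA, hqB⟩, hnadj⟩ := hp
      obtain ⟨⟨hpA', hqB'⟩, hnadj'⟩ := hq
      simp only at h
      have h2 : p.2 = q.2 := by
        by_contra hne2
        exact hnadj ⟨by rw [(memA p).mp hpA |>.2, (memB q).mp hqB |>.2]; decide, hne2⟩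
      have h2' : p'.2 = q'.2 := by
        by_contra hne2
        exact hnadj' ⟨by rw [(memA p').mp hpA' |>.2, (memB q').mp hqB' |>.2]; decide, hne2⟩
      have hpp : p = p' := Prod.ext (((memA p).mp hpA).2.trans ((memA p').mp hpA').2.symm) h
      have hqq : q = q' := Prod.ext (((memB q).mp hqB).2.trans ((memB q').mp hqB').2.symm)
        (by rw [← h2, ← h2', h])
      rw [Prod.ext_iff]; exact ⟨hpp, hqq⟩
    · intro s hs
      rw [Finset.mem_inter, hA2, hB2] at hs
      obtain ⟨p, hpA, hps⟩ := Finset.mem_image.mp hs.1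
      obtain ⟨q, hqB, hqs⟩ := Finset.mem_image.mp hs.2
      refine ⟨(p, q), ?_, hps⟩
      simp only [hM, Finset.mem_filter, Finset.mem_product]
      exact ⟨⟨hpA, hqB⟩, fun hadj => hadj.2 (hps.trans hqs.symm)⟩
  -- counting bounds
  have hunion : (A2 ∪ B2).card + (A2 ∩ B2).card = A2.card + B2.card :=
    Finset.card_union_add_card_inter A2 B2
  have hU6 : (A2 ∪ B2).card ≤ 6 := by
    have := Finset.card_le_univ (A2 ∪ B2)
    simpa using this
  have ha6 : A.card ≤ 6 := by rw [← hA2card]; have := Finset.card_le_univ A2; simpa using this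
  have hb6 : B.card ≤ 6 := by rw [← hB2card]; have := Finset.card_le_univ B2; simpa using this
  rw [hEW]
  set a := A.card
  set b := B.card
  have key1 : T.card ≤ a * b := by omega
  have key2 : T.card + a + b ≤ a * b + 6 := by omega
  rw [← hab]
  interval_cases a <;> interval_cases b <;> omega

theorem stmt15 :
    (∀ v, K66minus.degree v = 5) ∧
    Sparse3 K66minus ∧
    (∀ u v w : Fin 2 × Fin 6, K66minus.Adj u v → K66minus.Adj v w → K66minus.Adj u w → False) ∧
    (∀ u v : Fin 2 × Fin 6, u ≠ v → ¬ K66minus.Adj u v →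
      (commonNbrs K66minus u v).card = 0 ∨ (commonNbrs K66minus u v).card = 4) := by
  refine ⟨by decide, sparse3_K66, by decide, by decide⟩
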